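/- arXiv:math/0409606 — 4 statements merged into one kernel-verified Lean document; each statement's English description precedes it below -/
import Mathlib

section
/- Let T be a finite tree and let E denote the set of external (degree-1) nodes of T. Let (e_1,...,e_n) be any ordering of the edges of T. Define β(k) = 1 if both ends of e_k can be joined to some node of E using only edges among e_1,...,e_{k-1}, and β(k) = 0 otherwise. Then the sum of β(k) for k = 1,...,n equals #E − 1; in particular it is independent of the chosen ordering. -/
open scoped Classical
open SimpleGraph Finset

/-- The subgraph spanned by the edges `σ e_i` with `i < k`. -/
noncomputable def prefixGraph {V : Type*} (T : SimpleGraph V) {n : ℕ}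
    (σ : Fin n ≃ T.edgeSet) (k : Fin n) : SimpleGraph V :=
  SimpleGraph.fromEdgeSet {e | ∃ i : Fin n, i < k ∧ (σ i : Sym2 V) = e}

private lemma card_image_merge {α β : Type*} [DecidableEq α] [DecidableEq β]
    (f : α → β) (S : Finset α) (a b : α) (hab : a ≠ b) (hf : f a = f b)
    (hinj : ∀ x y, f x = f y → x = y ∨ (x = a ∧ y = b) ∨ (x = b ∧ y = a)) :
    S.card = (S.image f).card + (if a ∈ S ∧ b ∈ S then 1 else 0) := by
  by_cases h : a ∈ S ∧ b ∈ S
  · rw [if_pos h]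
    have himg : S.image f = (S.erase b).image f := by
      apply Finset.Subset.antisymm
      · intro z hz
        simp only [Finset.mem_image] at hz ⊢
        obtain ⟨x, hx, rfl⟩ := hz
        by_cases hxb : x = b
        · exact ⟨a, Finset.mem_erase.mpr ⟨hab, h.1⟩, by rw [hf, hxb]⟩
        · exact ⟨x, Finset.mem_erase.mpr ⟨hxb, hx⟩, rfl⟩
      · exact Finset.image_subset_image (Finset.erase_subset _ _)
    have hcard : ((S.erase b).image f).card = (S.erase b).card := by
      apply Finset.card_image_of_injOn
      intro x hx y hy hxy
      rcases hinj x y hxy with rfl | ⟨rfl, rfl⟩ | ⟨rfl, hyb⟩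
      · rfl
      · exact absurd (Finset.mem_erase.mp hy).1 (by simp)
      · exact absurd (Finset.mem_erase.mp hx).1 (by simp)
    rw [himg, hcard]
    exact (Finset.card_erase_add_one h.2).symm
  · rw [if_neg h, Nat.add_zero]
    symm
    apply Finset.card_image_of_injOn
    intro x hx y hy hxy
    rcases hinj x y hxy with rfl | ⟨rfl, rfl⟩ | ⟨rfl, rfl⟩
    · rfl
    · exact absurd ⟨hx, hy⟩ h
    · exact absurd ⟨hy, hx⟩ h

private lemma reachable_sup_edge {V : Type*} {G : SimpleGraph V} {a b x y : V}
    (h : (G ⊔ SimpleGraph.fromEdgeSet {s(a,b)}).Reachable x y) :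
    G.Reachable x y ∨ (G.Reachable x a ∧ G.Reachable b y) ∨
      (G.Reachable x b ∧ G.Reachable a y) := by
  obtain ⟨w⟩ := h
  induction w with
  | nil => exact Or.inl (Reachable.refl _)
  | @cons u v z hadj p ih =>
    rcases (SimpleGraph.sup_adj _ _ _ _).mp hadj with hG | hE
    · rcases ih with h1 | ⟨h1, h2⟩ | ⟨h1, h2⟩
      · exact Or.inl (hG.reachable.trans h1)
      · exact Or.inr (Or.inl ⟨hG.reachable.trans h1, h2⟩)
      · exact Or.inr (Or.inr ⟨hG.reachable.trans h1, h2⟩)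
    · rw [SimpleGraph.fromEdgeSet_adj, Set.mem_singleton_iff, Sym2.eq_iff] at hE
      rcases hE.1 with ⟨rfl, rfl⟩ | ⟨rfl, rfl⟩
      · rcases ih with h1 | ⟨h1, h2⟩ | ⟨h1, h2⟩
        · exact Or.inr (Or.inl ⟨Reachable.refl _, h1⟩)
        · exact Or.inl (h1.symm.trans h2)
        · exact Or.inl h2
      · rcases ih with h1 | ⟨h1, h2⟩ | ⟨h1, h2⟩
        · exact Or.inr (Or.inr ⟨Reachable.refl _, h1⟩)
        · exact Or.inl h2
        · exact Or.inl (h1.symm.trans h2)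

private lemma step_card {V : Type*} (G : SimpleGraph V) (a b : V)
    (hab : a ≠ b) (hreach : ¬ G.Reachable a b) (L : Finset V) :
    (L.image G.connectedComponentMk).card
      = (L.image (G ⊔ SimpleGraph.fromEdgeSet {s(a,b)}).connectedComponentMk).card
        + (if ((∃ y ∈ L, G.Reachable a y) ∧ (∃ y ∈ L, G.Reachable b y)) then 1 else 0) := by
  set G' := G ⊔ SimpleGraph.fromEdgeSet {s(a,b)} with hG'
  have hle : G ≤ G' := le_sup_left
  set φ : G.ConnectedComponent → G'.ConnectedComponent :=
    ConnectedComponent.map (SimpleGraph.Hom.ofLE hle) with hφ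
  have hcomp : ∀ v, φ (G.connectedComponentMk v) = G'.connectedComponentMk v := fun v => rfl
  have himg : L.image G'.connectedComponentMk = (L.image G.connectedComponentMk).image φ := by
    rw [Finset.image_image]
    congr 1
  have hmkab : G.connectedComponentMk a ≠ G.connectedComponentMk b := by
    intro h
    exact hreach (ConnectedComponent.exact h)
  have hfab : φ (G.connectedComponentMk a) = φ (G.connectedComponentMk b) := by
    rw [hcomp, hcomp]
    apply ConnectedComponent.sound
    exact SimpleGraph.Adj.reachable (Or.inr ((SimpleGraph.fromEdgeSet_adj _).mpr ⟨rfl, hab⟩))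
  have hinj : ∀ X Y, φ X = φ Y → X = Y ∨
      (X = G.connectedComponentMk a ∧ Y = G.connectedComponentMk b) ∨
      (X = G.connectedComponentMk b ∧ Y = G.connectedComponentMk a) := by
    refine ConnectedComponent.ind₂ (fun u v h => ?_)
    rw [hcomp, hcomp] at h
    rcases reachable_sup_edge (ConnectedComponent.exact h) with h1 | ⟨h1, h2⟩ | ⟨h1, h2⟩
    · exact Or.inl (ConnectedComponent.sound h1)
    · exact Or.inr (Or.inl ⟨ConnectedComponent.sound h1, ConnectedComponent.sound h2.symm⟩)
    · exact Or.inr (Or.inr ⟨ConnectedComponent.sound h1, ConnectedComponent.sound h2.symm⟩)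
  rw [himg]
  rw [card_image_merge φ (L.image G.connectedComponentMk) (G.connectedComponentMk a)
    (G.connectedComponentMk b) hmkab hfab hinj]
  congr 1
  have hmem : ∀ c : V, (G.connectedComponentMk c ∈ L.image G.connectedComponentMk)
      ↔ (∃ y ∈ L, G.Reachable c y) := by
    intro c
    simp only [Finset.mem_image]
    constructor
    · rintro ⟨y, hy, hyc⟩
      exact ⟨y, hy, (ConnectedComponent.exact hyc).symm⟩
    · rintro ⟨y, hy, hcy⟩
      exact ⟨y, hy, ConnectedComponent.sound hcy.symm⟩
  rw [if_congr (and_congr (hmem a) (hmem b)) rfl rfl]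

private lemma exists_leaf {V : Type*} [Fintype V] {T : SimpleGraph V} (hT : T.IsTree)
    (hE : T.edgeSet.Nonempty) : ∃ v, T.degree v = 1 := by
  by_contra hno
  push_neg at hno
  obtain ⟨e, he⟩ := hE
  obtain ⟨a, b⟩ := e
  rw [SimpleGraph.mem_edgeSet] at he
  have hcard2 : 2 ≤ Fintype.card V := by
    have : a ≠ b := he.ne
    calc 2 = ({a, b} : Finset V).card := by rw [Finset.card_insert_of_notMem (by simp [this]), Finset.card_singleton]
    _ ≤ Finset.univ.card := Finset.card_le_card (Finset.subset_univ _)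
    _ = Fintype.card V := Finset.card_univ
  have hdeg : ∀ v : V, 2 ≤ T.degree v := by
    intro v
    have hpos : 0 < T.degree v := by
      rw [T.degree_pos_iff_exists_adj v]
      obtain ⟨w, hw⟩ : ∃ w : V, w ≠ v := by
        by_contra hc
        push_neg at hc
        have : Fintype.card V ≤ 1 := Fintype.card_le_one_iff.mpr (fun x y => by rw [hc x, hc y])
        omega
      obtain ⟨p⟩ := hT.isConnected.preconnected v w
      cases p with
      | nil => exact absurd rfl hw
      | cons h q => exact ⟨_, h⟩
    have := hno v
    omega
  have hsum : ∑ v : V, T.degree v = 2 * T.edgeFinset.card :=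
    SimpleGraph.sum_degrees_eq_twice_card_edges T
  have hEc : T.edgeFinset.card + 1 = Fintype.card V := hT.card_edgeFinset
  have : 2 * Fintype.card V ≤ ∑ v : V, T.degree v := by
    calc 2 * Fintype.card V = ∑ _v : V, 2 := by simp [mul_comm]
    _ ≤ ∑ v : V, T.degree v := Finset.sum_le_sum (fun v _ => hdeg v)
  omega

private noncomputable def pg {V : Type*} {n : ℕ} (T : SimpleGraph V) (σ : Fin n ≃ T.edgeSet)
    (m : ℕ) : SimpleGraph V :=
  SimpleGraph.fromEdgeSet {e | ∃ i : Fin n, (i : ℕ) < m ∧ (σ i : Sym2 V) = e}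

private noncomputable def fc {V : Type*} [Fintype V] {n : ℕ} (T : SimpleGraph V)
    (σ : Fin n ≃ T.edgeSet) (m : ℕ) : ℕ :=
  ((Finset.univ.filter (fun v => T.degree v = 1)).image (pg T σ m).connectedComponentMk).card

private lemma pg_eq_prefixGraph {V : Type*} {n : ℕ} (T : SimpleGraph V)
    (σ : Fin n ≃ T.edgeSet) (k : Fin n) : prefixGraph T σ k = pg T σ (k : ℕ) := rfl

private lemma pg_zero {V : Type*} {n : ℕ} (T : SimpleGraph V) (σ : Fin n ≃ T.edgeSet) :
    pg T σ 0 = ⊥ := by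
  unfold pg
  convert SimpleGraph.fromEdgeSet_empty
  ext e
  simp

private lemma pg_top {V : Type*} {n : ℕ} (T : SimpleGraph V) (σ : Fin n ≃ T.edgeSet) :
    pg T σ n = T := by
  unfold pg
  have hset : {e | ∃ i : Fin n, (i : ℕ) < n ∧ (σ i : Sym2 V) = e} = T.edgeSet := by
    ext e
    constructor
    · rintro ⟨i, -, rfl⟩; exact (σ i).2
    · intro he
      refine ⟨σ.symm ⟨e, he⟩, (σ.symm ⟨e, he⟩).isLt, ?_⟩
      rw [Equiv.apply_symm_apply]
  rw [hset, SimpleGraph.fromEdgeSet_edgeSet]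

private lemma fc_step {V : Type*} [Fintype V] {n : ℕ} (T : SimpleGraph V) (hT : T.IsTree)
    (σ : Fin n ≃ T.edgeSet) (k : Fin n) :
    fc T σ (k : ℕ) = fc T σ ((k : ℕ) + 1)
      + (if (∀ x ∈ (σ k : Sym2 V), ∃ y, T.degree y = 1 ∧
          (prefixGraph T σ k).Reachable x y) then 1 else 0) := by
  obtain ⟨a, b, hab_e⟩ : ∃ a b, (σ k : Sym2 V) = s(a, b) := by
    induction (σ k : Sym2 V) using Sym2.ind with
    | _ x y => exact ⟨x, y, rfl⟩
  have hadj : T.Adj a b := by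
    rw [← SimpleGraph.mem_edgeSet, ← hab_e]; exact (σ k).2
  have hne : a ≠ b := hadj.ne
  have hsplit : pg T σ ((k : ℕ) + 1) = pg T σ (k : ℕ) ⊔ SimpleGraph.fromEdgeSet {s(a, b)} := by
    unfold pg
    rw [← SimpleGraph.fromEdgeSet_union]
    congr 1
    ext e
    simp only [Set.mem_union, Set.mem_setOf_eq, Set.mem_singleton_iff]
    constructor
    · rintro ⟨i, hi, rfl⟩
      rcases Nat.lt_succ_iff_lt_or_eq.mp hi with h | h
      · exact Or.inl ⟨i, h, rfl⟩
      · right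
        rw [← hab_e]
        exact congrArg (fun j => ((σ j : T.edgeSet) : Sym2 V)) (Fin.ext h)
    · rintro (⟨i, hi, rfl⟩ | rfl)
      · exact ⟨i, Nat.lt_succ_of_lt hi, rfl⟩
      · exact ⟨k, Nat.lt_succ_self _, hab_e⟩
  have hsub : pg T σ (k : ℕ) ≤ T \ SimpleGraph.fromEdgeSet {s(a, b)} := by
    intro x y hxy
    rw [pg, SimpleGraph.fromEdgeSet_adj] at hxy
    obtain ⟨⟨i, hik, hie⟩, hne'⟩ := hxy
    rw [SimpleGraph.sdiff_adj]
    constructor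
    · rw [← SimpleGraph.mem_edgeSet, ← hie]; exact (σ i).2
    · rw [SimpleGraph.fromEdgeSet_adj]
      rintro ⟨hmem, -⟩
      rw [Set.mem_singleton_iff] at hmem
      have h1 : (σ i : Sym2 V) = (σ k : Sym2 V) := by rw [hie, hmem, hab_e]
      have h2 : i = k := σ.injective (Subtype.ext h1)
      exact absurd hik (by rw [h2]; exact lt_irrefl _)
  have hbridge : ¬ (T \ SimpleGraph.fromEdgeSet {s(a, b)}).Reachable a b :=
    ((SimpleGraph.isBridge_iff).mp
      (SimpleGraph.isAcyclic_iff_forall_adj_isBridge.mp hT.IsAcyclic hadj))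
  have hreach : ¬ (pg T σ (k : ℕ)).Reachable a b :=
    fun h => hbridge (SimpleGraph.Reachable.mono hsub h)
  have hmain := step_card (pg T σ (k : ℕ)) a b hne hreach
    (Finset.univ.filter (fun v => T.degree v = 1))
  rw [← hsplit] at hmain
  have hiff : ((∃ y ∈ (Finset.univ.filter (fun v => T.degree v = 1)),
        (pg T σ (k : ℕ)).Reachable a y) ∧
      (∃ y ∈ (Finset.univ.filter (fun v => T.degree v = 1)),
        (pg T σ (k : ℕ)).Reachable b y)) ↔
      (∀ x ∈ (σ k : Sym2 V), ∃ y, T.degree y = 1 ∧ (prefixGraph T σ k).Reachable x y) := by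
    rw [hab_e, pg_eq_prefixGraph]
    simp only [Sym2.mem_iff, Finset.mem_filter, Finset.mem_univ, true_and]
    constructor
    · rintro ⟨⟨y1, hy1, hr1⟩, ⟨y2, hy2, hr2⟩⟩ x hx
      rcases hx with rfl | rfl
      · exact ⟨y1, hy1, hr1⟩
      · exact ⟨y2, hy2, hr2⟩
    · intro h
      obtain ⟨y1, h1, r1⟩ := h a (Or.inl rfl)
      obtain ⟨y2, h2, r2⟩ := h b (Or.inr rfl)
      exact ⟨⟨y1, h1, r1⟩, ⟨y2, h2, r2⟩⟩
  simp only [hiff] at hmain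
  unfold fc
  rw [hmain]

private lemma fc_zero {V : Type*} [Fintype V] {n : ℕ} (T : SimpleGraph V)
    (σ : Fin n ≃ T.edgeSet) :
    fc T σ 0 = (Finset.univ.filter (fun v => T.degree v = 1)).card := by
  unfold fc
  rw [pg_zero]
  apply Finset.card_image_of_injOn
  intro x _ y _ hxy
  exact SimpleGraph.reachable_bot.mp (ConnectedComponent.exact hxy)

private lemma fc_top {V : Type*} [Fintype V] {n : ℕ} (T : SimpleGraph V) (hT : T.IsTree)
    (σ : Fin n ≃ T.edgeSet) (hn : 1 ≤ n) : fc T σ n = 1 := by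
  unfold fc
  rw [pg_top]
  obtain ⟨v, hv⟩ := exists_leaf hT ⟨(σ ⟨0, hn⟩ : Sym2 V), (σ ⟨0, hn⟩).2⟩
  have hvL : v ∈ Finset.univ.filter (fun v => T.degree v = 1) := by simp [hv]
  have hsing : (Finset.univ.filter (fun v => T.degree v = 1)).image T.connectedComponentMk
      = {T.connectedComponentMk v} := by
    apply Finset.eq_singleton_iff_nonempty_unique_mem.mpr
    refine ⟨Finset.image_nonempty.mpr ⟨v, hvL⟩, ?_⟩
    intro c hc
    obtain ⟨y, -, rfl⟩ := Finset.mem_image.mp hc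
    exact ConnectedComponent.sound (hT.isConnected.preconnected y v)
  rw [hsing, Finset.card_singleton]

/-- Massuyeau's lemma: let `T` be a finite tree with at least one edge, let `E` be
its set of external (degree-1) nodes, and let `σ = (e_1, …, e_n)` be an ordering of
the edges of `T`.  Set `β(k) = 1` if both ends of `e_k` can be joined to `E` using
only the edges `e_1, …, e_{k-1}` (length-0 paths allowed), and `β(k) = 0` otherwise.
Then `∑ β(k) = #E - 1`; in particular the sum does not depend on the ordering. -/
theorem sum_beta_eq_card_leaves_sub_one {V : Type*} [Fintype V]
    (T : SimpleGraph V) (hT : T.IsTree) (n : ℕ) (hn : 1 ≤ n)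
    (σ : Fin n ≃ T.edgeSet) :
    (∑ k : Fin n, if (∀ x ∈ (σ k : Sym2 V), ∃ y, T.degree y = 1 ∧
          (prefixGraph T σ k).Reachable x y) then 1 else 0)
      = (Finset.univ.filter (fun v => T.degree v = 1)).card - 1 := by
  set B : Fin n → ℕ := fun k => if (∀ x ∈ (σ k : Sym2 V), ∃ y, T.degree y = 1 ∧
      (prefixGraph T σ k).Reachable x y) then 1 else 0 with hB
  set B' : ℕ → ℕ := fun m => if h : m < n then B ⟨m, h⟩ else 0 with hB'
  have hsum' : ∑ m ∈ Finset.range n, B' m = ∑ k : Fin n, B k := by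
    rw [Finset.sum_range]
    apply Finset.sum_congr rfl
    intro i _
    rw [hB']
    exact dif_pos i.isLt
  have htel : ∀ m, m ≤ n → fc T σ 0 = fc T σ m + ∑ i ∈ Finset.range m, B' i := by
    intro m
    induction m with
    | zero => simp
    | succ m ih =>
      intro hm
      have hmn : m < n := hm
      rw [Finset.sum_range_succ, ih (le_of_lt hmn)]
      have h2 : fc T σ m = fc T σ (m + 1) + B ⟨m, hmn⟩ := fc_step T hT σ ⟨m, hmn⟩
      have hBm : B' m = B ⟨m, hmn⟩ := dif_pos hmn
      omega
  have hmain := htel n (le_refl n)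
  rw [fc_zero, fc_top T hT σ hn, hsum'] at hmain
  have he : Finset.univ.sum B = ∑ k : Fin n, B k := rfl
  rw [he, hmain]
  omega
end

section
/- Let T be a finite tree, N its set of leaves, and assume every vertex of T not in N has degree ≥ 2. For an ordering (e_1,...,e_n) of the edges define α(k) = 0 if both ends of e_k can be reached from N using edges e_1,...,e_{k-1} only, and α(k) = 1 otherwise. Then Σ_{k=1}^n α(k) = n − (#N − 1). -/
open scoped Classical
open SimpleGraph Finset

/-- ℕ-indexed version of `prefixGraph`. -/
noncomputable def natPrefixGraph {V : Type*} (T : SimpleGraph V) {n : ℕ}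
    (σ : Fin n ≃ T.edgeSet) (m : ℕ) : SimpleGraph V :=
  SimpleGraph.fromEdgeSet {e | ∃ i : Fin n, (i : ℕ) < m ∧ (σ i : Sym2 V) = e}

lemma prefixGraph_eq_nat {V : Type*} (T : SimpleGraph V) {n : ℕ}
    (σ : Fin n ≃ T.edgeSet) (k : Fin n) :
    prefixGraph T σ k = natPrefixGraph T σ (k : ℕ) := rfl

lemma natPrefixGraph_mono {V : Type*} (T : SimpleGraph V) {n : ℕ}
    (σ : Fin n ≃ T.edgeSet) {m m' : ℕ} (h : m ≤ m') :
    natPrefixGraph T σ m ≤ natPrefixGraph T σ m' := by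
  apply SimpleGraph.fromEdgeSet_mono
  rintro e ⟨i, hi, he⟩
  exact ⟨i, lt_of_lt_of_le hi h, he⟩

lemma natPrefixGraph_zero {V : Type*} (T : SimpleGraph V) {n : ℕ}
    (σ : Fin n ≃ T.edgeSet) : natPrefixGraph T σ 0 = ⊥ := by
  rw [natPrefixGraph]
  convert SimpleGraph.fromEdgeSet_empty
  ext e
  simp

lemma natPrefixGraph_top {V : Type*} (T : SimpleGraph V) {n : ℕ}
    (σ : Fin n ≃ T.edgeSet) : natPrefixGraph T σ n = T := by
  rw [natPrefixGraph]
  have : {e : Sym2 V | ∃ i : Fin n, (i : ℕ) < n ∧ (σ i : Sym2 V) = e} = T.edgeSet := by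
    ext e
    constructor
    · rintro ⟨i, _, he⟩
      exact he ▸ (σ i).prop
    · intro he
      exact ⟨σ.symm ⟨e, he⟩, (σ.symm ⟨e, he⟩).isLt, by simp⟩
  rw [this, SimpleGraph.fromEdgeSet_edgeSet]

lemma natPrefixGraph_succ {V : Type*} (T : SimpleGraph V) {n : ℕ}
    (σ : Fin n ≃ T.edgeSet) {m : ℕ} (hm : m < n) :
    natPrefixGraph T σ (m + 1)
      = natPrefixGraph T σ m ⊔ SimpleGraph.fromEdgeSet {(σ ⟨m, hm⟩ : Sym2 V)} := by
  rw [natPrefixGraph, natPrefixGraph, ← SimpleGraph.fromEdgeSet_union]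
  congr 1
  ext e
  constructor
  · rintro ⟨i, hi, he⟩
    rcases Nat.lt_or_ge (i : ℕ) m with h | h
    · exact Or.inl ⟨i, h, he⟩
    · have : i = ⟨m, hm⟩ := Fin.ext (by simp; omega)
      exact Or.inr (by rw [← he, this]; rfl)
  · rintro (⟨i, hi, he⟩ | he)
    · exact ⟨i, by omega, he⟩
    · exact ⟨⟨m, hm⟩, by simp, (Set.mem_singleton_iff.mp he).symm⟩

lemma sup_edge_reachable_iff {V : Type*} (G : SimpleGraph V) {u v : V} (huv : u ≠ v)
    (x y : V) :
    (G ⊔ SimpleGraph.fromEdgeSet {s(u, v)}).Reachable x y ↔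
      G.Reachable x y ∨ (G.Reachable x u ∧ G.Reachable v y) ∨
        (G.Reachable x v ∧ G.Reachable u y) := by
  constructor
  · rintro ⟨w⟩
    induction w with
    | nil => exact Or.inl Reachable.rfl
    | @cons a b c h p ih =>
      rw [SimpleGraph.sup_adj, SimpleGraph.fromEdgeSet_adj] at h
      rcases h with h | ⟨hm, hne⟩
      · rcases ih with r | ⟨r1, r2⟩ | ⟨r1, r2⟩
        · exact Or.inl (h.reachable.trans r)
        · exact Or.inr (Or.inl ⟨h.reachable.trans r1, r2⟩)
        · exact Or.inr (Or.inr ⟨h.reachable.trans r1, r2⟩)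
      · rw [Set.mem_singleton_iff, Sym2.eq_iff] at hm
        rcases hm with ⟨rfl, rfl⟩ | ⟨rfl, rfl⟩
        · rcases ih with r | ⟨r1, r2⟩ | ⟨r1, r2⟩
          · exact Or.inr (Or.inl ⟨Reachable.rfl, r⟩)
          · exact Or.inr (Or.inl ⟨Reachable.rfl, r2⟩)
          · exact Or.inl r2
        · rcases ih with r | ⟨r1, r2⟩ | ⟨r1, r2⟩
          · exact Or.inr (Or.inr ⟨Reachable.rfl, r⟩)
          · exact Or.inl r2
          · exact Or.inr (Or.inr ⟨Reachable.rfl, r2⟩)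
  · have hle : G ≤ G ⊔ SimpleGraph.fromEdgeSet {s(u, v)} := le_sup_left
    have hadj : (G ⊔ SimpleGraph.fromEdgeSet {s(u, v)}).Adj u v := by
      simp [huv]
    rintro (r | ⟨r1, r2⟩ | ⟨r1, r2⟩)
    · exact r.mono hle
    · exact ((r1.mono hle).trans hadj.reachable).trans (r2.mono hle)
    · exact ((r1.mono hle).trans hadj.symm.reachable).trans (r2.mono hle)

private lemma telescope_aux (c g : ℕ → ℕ) :
    ∀ n : ℕ, (∀ m < n, c m = c (m + 1) + g m) →
      c 0 = c n + ∑ m ∈ Finset.range n, g m := by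
  intro n
  induction n with
  | zero => simp
  | succ n ih =>
    intro h
    have h1 := ih (fun m hm => h m (by omega))
    have h2 := h n (by omega)
    rw [Finset.sum_range_succ]
    omega

/-- The key step: adding the `m`-th edge decreases the number of leaf components by
the indicator of "both ends reachable from a leaf". -/
private lemma step_lemma {V : Type*} [Fintype V]
    (T : SimpleGraph V) (hT : T.IsTree)
    {n : ℕ} (σ : Fin n ≃ T.edgeSet) {m : ℕ} (hm : m < n) :
    ((Finset.univ.filter (fun v => T.degree v = 1)).image
        (natPrefixGraph T σ m).connectedComponentMk).card
      = ((Finset.univ.filter (fun v => T.degree v = 1)).image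
          (natPrefixGraph T σ (m + 1)).connectedComponentMk).card
        + (if (∀ x ∈ (σ ⟨m, hm⟩ : Sym2 V), ∃ y, T.degree y = 1 ∧
              (natPrefixGraph T σ m).Reachable x y) then 1 else 0) := by
  set N : Finset V := Finset.univ.filter (fun v => T.degree v = 1) with hN
  set G := natPrefixGraph T σ m with hG
  set G' := natPrefixGraph T σ (m + 1) with hG'def
  obtain ⟨u, v, huv⟩ : ∃ u v, (σ ⟨m, hm⟩ : Sym2 V) = s(u, v) :=
    Sym2.exists.mp ⟨(σ ⟨m, hm⟩ : Sym2 V), rfl⟩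
  have hadj : T.Adj u v := T.mem_edgeSet.mp (huv ▸ (σ ⟨m, hm⟩).prop)
  have hne : u ≠ v := hadj.ne
  have hG' : G' = G ⊔ SimpleGraph.fromEdgeSet {s(u, v)} := by
    rw [hG'def, natPrefixGraph_succ T σ hm, huv, hG]
  have hreach : ∀ x y : V, G'.Reachable x y ↔
      G.Reachable x y ∨ (G.Reachable x u ∧ G.Reachable v y) ∨
        (G.Reachable x v ∧ G.Reachable u y) := by
    intro x y
    rw [hG']
    exact sup_edge_reachable_iff G hne x y
  -- the edge u-v is a bridge of T and G avoids it, so u, v are not reachable in G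
  have hGle : G ≤ T \ SimpleGraph.fromEdgeSet {s(u, v)} := by
    intro x y hxy
    rw [hG, natPrefixGraph] at hxy
    rw [SimpleGraph.fromEdgeSet_adj] at hxy
    obtain ⟨⟨i, hi, he⟩, hxyne⟩ := hxy
    constructor
    · exact T.mem_edgeSet.mp (he ▸ (σ i).prop)
    · rw [SimpleGraph.fromEdgeSet_adj]
      rintro ⟨hmem, -⟩
      rw [Set.mem_singleton_iff] at hmem
      have : σ i = σ ⟨m, hm⟩ := Subtype.ext (by rw [huv, he, hmem])
      have h2 := σ.injective this
      rw [Fin.ext_iff] at h2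
      simp at h2
      omega
  have hbr : ¬ G.Reachable u v := by
    have hbridge := (SimpleGraph.isAcyclic_iff_forall_edge_isBridge.mp hT.2)
      (T.mem_edgeSet.mpr hadj)
    have := SimpleGraph.isBridge_iff.mp hbridge
    exact fun h => this (h.mono hGle)
  -- rephrase the condition
  have hcond : (∀ x ∈ (σ ⟨m, hm⟩ : Sym2 V), ∃ y, T.degree y = 1 ∧ G.Reachable x y) ↔
      ((∃ a, T.degree a = 1 ∧ G.Reachable u a) ∧ (∃ b, T.degree b = 1 ∧ G.Reachable v b)) := by
    rw [huv]
    constructor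
    · intro h
      exact ⟨h u (Sym2.mem_mk_left u v), h v (Sym2.mem_mk_right u v)⟩
    · rintro ⟨h1, h2⟩ x hx
      rcases Sym2.mem_iff.mp hx with rfl | rfl
      · exact h1
      · exact h2
  have hmemN : ∀ a : V, a ∈ N ↔ T.degree a = 1 := by
    intro a; simp [hN]
  -- the induced map on connected components
  have hle : G ≤ G' := natPrefixGraph_mono T σ (Nat.le_succ m)
  set φ : G.ConnectedComponent → G'.ConnectedComponent :=
    SimpleGraph.ConnectedComponent.map (SimpleGraph.Hom.ofLE hle) with hφdef
  have hφ : ∀ x : V, φ (G.connectedComponentMk x) = G'.connectedComponentMk x := by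
    intro x
    rw [hφdef, SimpleGraph.ConnectedComponent.map_mk]
    rfl
  have himg : N.image G'.connectedComponentMk = (N.image G.connectedComponentMk).image φ := by
    rw [Finset.image_image]
    apply Finset.image_congr
    intro a _
    exact (hφ a).symm
  by_cases hc : (∀ x ∈ (σ ⟨m, hm⟩ : Sym2 V), ∃ y, T.degree y = 1 ∧ G.Reachable x y)
  · -- both ends reachable from leaves: card drops by one
    rw [if_pos hc]
    obtain ⟨⟨a, ha1, hau⟩, ⟨b, hb1, hbv⟩⟩ := hcond.mp hc
    set S := N.image G.connectedComponentMk with hS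
    set A := G.connectedComponentMk a with hA
    set B := G.connectedComponentMk b with hB
    have haN : a ∈ N := (hmemN a).mpr ha1
    have hbN : b ∈ N := (hmemN b).mpr hb1
    have hAS : A ∈ S := Finset.mem_image_of_mem _ haN
    have hBS : B ∈ S := Finset.mem_image_of_mem _ hbN
    have hAB : A ≠ B := by
      intro h
      rw [hA, hB, SimpleGraph.ConnectedComponent.eq] at h
      exact hbr ((hau.trans h).trans hbv.symm)
    have hφAB : φ A = φ B := by
      rw [hA, hB, hφ, hφ, SimpleGraph.ConnectedComponent.eq, hreach]
      exact Or.inr (Or.inl ⟨hau.symm, hbv⟩)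
    have hinj : Set.InjOn φ ↑(S.erase A) := by
      intro C hC D hD hCD
      simp only [Finset.coe_erase, Set.mem_diff, Finset.mem_coe, Set.mem_singleton_iff] at hC hD
      obtain ⟨hCS, hCA⟩ := hC
      obtain ⟨hDS, hDA⟩ := hD
      obtain ⟨c, hcN, rfl⟩ := Finset.mem_image.mp hCS
      obtain ⟨d, hdN, rfl⟩ := Finset.mem_image.mp hDS
      rw [hφ, hφ, SimpleGraph.ConnectedComponent.eq, hreach] at hCD
      rcases hCD with r | ⟨r1, r2⟩ | ⟨r1, r2⟩
      · exact SimpleGraph.ConnectedComponent.eq.mpr r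
      · exact absurd (SimpleGraph.ConnectedComponent.eq.mpr (r1.trans hau) : _ = A) hCA
      · exact absurd (SimpleGraph.ConnectedComponent.eq.mpr (r2.symm.trans hau) : _ = A) hDA
    have himg2 : S.image φ = (S.erase A).image φ := by
      apply Finset.Subset.antisymm
      · intro y hy
        obtain ⟨C, hCS, rfl⟩ := Finset.mem_image.mp hy
        by_cases hCA : C = A
        · subst hCA
          rw [hφAB]
          exact Finset.mem_image_of_mem φ (Finset.mem_erase.mpr ⟨Ne.symm hAB, hBS⟩)
        · exact Finset.mem_image_of_mem φ (Finset.mem_erase.mpr ⟨hCA, hCS⟩)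
      · exact Finset.image_subset_image (Finset.erase_subset _ _)
    have hcard : (N.image G'.connectedComponentMk).card = S.card - 1 := by
      rw [himg, himg2, Finset.card_image_of_injOn hinj, Finset.card_erase_of_mem hAS]
    have hpos : 1 ≤ S.card := Finset.card_pos.mpr ⟨A, hAS⟩
    rw [hcard]
    omega
  · -- not both ends reachable: card is preserved
    rw [if_neg hc]
    have hnc : ¬((∃ a, T.degree a = 1 ∧ G.Reachable u a) ∧
        (∃ b, T.degree b = 1 ∧ G.Reachable v b)) := fun h => hc (hcond.mpr h)
    have hinj : Set.InjOn φ ↑(N.image G.connectedComponentMk) := by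
      intro C hC D hD hCD
      rw [Finset.mem_coe] at hC hD
      obtain ⟨c, hcN, rfl⟩ := Finset.mem_image.mp hC
      obtain ⟨d, hdN, rfl⟩ := Finset.mem_image.mp hD
      rw [hφ, hφ, SimpleGraph.ConnectedComponent.eq, hreach] at hCD
      rcases hCD with r | ⟨r1, r2⟩ | ⟨r1, r2⟩
      · exact SimpleGraph.ConnectedComponent.eq.mpr r
      · exact absurd ⟨⟨c, (hmemN c).mp hcN, r1.symm⟩, ⟨d, (hmemN d).mp hdN, r2⟩⟩ hnc
      · exact absurd ⟨⟨d, (hmemN d).mp hdN, r2⟩, ⟨c, (hmemN c).mp hcN, r1.symm⟩⟩ hnc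
    rw [himg, Finset.card_image_of_injOn hinj]
    simp

/-- Let `T` be a finite tree with `n ≥ 1` edges, let `N` be its set of leaves
(degree-1 vertices), and assume every vertex not in `N` has degree ≥ 2.
For an ordering `(e_1, …, e_n)` of the edges, let `α(k) = 0` if both ends of
`e_k` can be reached from `N` using only the edges `e_1, …, e_{k-1}` (length-0
paths allowed), and `α(k) = 1` otherwise.  Then `∑ α(k) = n - (#N - 1)`. -/
theorem alphaSum_leaves {V : Type*} [Fintype V]
    (T : SimpleGraph V) (hT : T.IsTree)
    (hdeg : ∀ v, T.degree v ≠ 1 → 2 ≤ T.degree v)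
    (n : ℕ) (hn : 1 ≤ n) (σ : Fin n ≃ T.edgeSet) :
    (∑ k : Fin n, if (∀ x ∈ (σ k : Sym2 V), ∃ y, T.degree y = 1 ∧
          (prefixGraph T σ k).Reachable x y) then 0 else 1)
      = n - ((Finset.univ.filter (fun v => T.degree v = 1)).card - 1) := by
  classical
  set N : Finset V := Finset.univ.filter (fun v => T.degree v = 1) with hN
  -- number of vertices
  have hcardE : Fintype.card T.edgeSet = n := by
    rw [← Fintype.card_fin n]
    exact (Fintype.card_congr σ).symm
  have hVpos : 0 < Fintype.card V := by
    have : Nonempty V := hT.isConnected.nonempty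
    exact Fintype.card_pos
  have hV : Fintype.card V = n + 1 := by
    have h1 : T.edgeFinset.card + 1 = Fintype.card V := hT.card_edgeFinset
    rw [SimpleGraph.edgeFinset_card, hcardE] at h1
    omega
  -- N is nonempty
  have hNne : N.Nonempty := by
    by_contra h
    rw [Finset.not_nonempty_iff_eq_empty] at h
    have hall : ∀ v : V, 2 ≤ T.degree v := by
      intro v
      apply hdeg
      intro hv
      have : v ∈ N := by simp [hN, hv]
      simp [h] at this
    have hsum := T.sum_degrees_eq_twice_card_edges
    rw [SimpleGraph.edgeFinset_card, hcardE] at hsum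
    have hge : (Fintype.card V) * 2 ≤ ∑ v : V, T.degree v := by
      calc (Fintype.card V) * 2 = ∑ _v : V, 2 := by
            rw [Finset.sum_const, Finset.card_univ, smul_eq_mul]
          _ ≤ ∑ v : V, T.degree v := Finset.sum_le_sum (fun v _ => hall v)
    omega
  -- leaf component counting function
  set c : ℕ → ℕ := fun m => (N.image (natPrefixGraph T σ m).connectedComponentMk).card
    with hc
  -- c 0 = N.card
  have hc0 : c 0 = N.card := by
    rw [hc]
    simp only
    apply Finset.card_image_of_injOn
    intro x _ y _ hxy
    rw [SimpleGraph.ConnectedComponent.eq, natPrefixGraph_zero] at hxy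
    exact SimpleGraph.reachable_bot.mp hxy
  -- c n = 1
  have hcn : c n = 1 := by
    rw [hc]
    simp only
    obtain ⟨l, hl⟩ := hNne
    apply Finset.card_eq_one.mpr
    refine ⟨(natPrefixGraph T σ n).connectedComponentMk l, ?_⟩
    apply Finset.eq_singleton_iff_unique_mem.mpr
    constructor
    · exact Finset.mem_image_of_mem _ hl
    · intro y hy
      obtain ⟨x, _, rfl⟩ := Finset.mem_image.mp hy
      rw [SimpleGraph.ConnectedComponent.eq, natPrefixGraph_top]
      exact hT.isConnected.preconnected x l
  -- the step function
  set g : ℕ → ℕ := fun m =>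
    if h : m < n then
      (if (∀ x ∈ (σ ⟨m, h⟩ : Sym2 V), ∃ y, T.degree y = 1 ∧
          (natPrefixGraph T σ m).Reachable x y) then 1 else 0)
    else 0 with hg
  have hstep : ∀ m < n, c m = c (m + 1) + g m := by
    intro m hm
    rw [hg]
    simp only [dif_pos hm]
    exact step_lemma T hT σ hm
  have htel := telescope_aux c g n hstep
  -- converting the sums
  have hsum_g : ∑ m ∈ Finset.range n, g m
      = ∑ k : Fin n, (if (∀ x ∈ (σ k : Sym2 V), ∃ y, T.degree y = 1 ∧
          (prefixGraph T σ k).Reachable x y) then 1 else 0) := by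
    rw [← Fin.sum_univ_eq_sum_range]
    apply Finset.sum_congr rfl
    intro k _
    rw [hg]
    simp only [dif_pos k.isLt, Fin.eta]
    rw [prefixGraph_eq_nat]
  have hkey : N.card = 1 + ∑ k : Fin n, (if (∀ x ∈ (σ k : Sym2 V), ∃ y, T.degree y = 1 ∧
      (prefixGraph T σ k).Reachable x y) then 1 else 0) := by
    rw [← hc0, htel, hcn, hsum_g]
  -- pointwise α + β = 1
  have hab : ∀ k : Fin n,
      (if (∀ x ∈ (σ k : Sym2 V), ∃ y, T.degree y = 1 ∧
          (prefixGraph T σ k).Reachable x y) then (0:ℕ) else 1)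
      + (if (∀ x ∈ (σ k : Sym2 V), ∃ y, T.degree y = 1 ∧
          (prefixGraph T σ k).Reachable x y) then 1 else 0) = 1 := by
    intro k
    by_cases h : (∀ x ∈ (σ k : Sym2 V), ∃ y, T.degree y = 1 ∧
        (prefixGraph T σ k).Reachable x y)
    · rw [if_pos h, if_pos h]
    · rw [if_neg h, if_neg h]
  have hsum_total : (∑ k : Fin n, if (∀ x ∈ (σ k : Sym2 V), ∃ y, T.degree y = 1 ∧
        (prefixGraph T σ k).Reachable x y) then (0:ℕ) else 1)
      + (∑ k : Fin n, if (∀ x ∈ (σ k : Sym2 V), ∃ y, T.degree y = 1 ∧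
        (prefixGraph T σ k).Reachable x y) then (1:ℕ) else 0) = n := by
    rw [← Finset.sum_add_distrib]
    simp_rw [hab]
    simp
  omega
end

section
/- Let T be a tree with vertex set partitioned into C and N. Blowing up a non-leaf vertex v ∈ N of degree d ≥ 2 into d new degree-1 vertices of N (each incident to one of the d edges formerly at v) yields a forest T' in which, for every ordering of the edges, the sum Σ α(k) (with α defined via reachability to N as before) is unchanged. -/
open scoped Classical
open SimpleGraph Finset

/-- The image of an edge of `T` under the blow-up of the vertex `v`: an edge
incident to `v` gets transferred to the corresponding new leaf vertex (indexed
by the edge itself), all other edges are unchanged. -/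
noncomputable def blowEdge {V : Type*} (T : SimpleGraph V) (v : V)
    (e : T.edgeSet) : Sym2 (V ⊕ T.edgeSet) :=
  if h : v ∈ (e : Sym2 V) then s(Sum.inr e, Sum.inl (Sym2.Mem.other h))
  else Sym2.map Sum.inl (e : Sym2 V)

/-- The blow-up of `T` at the vertex `v`: `v` of degree `d` is replaced by `d`
new degree-1 vertices, one for each edge formerly incident to `v`. -/
noncomputable def blowUp {V : Type*} (T : SimpleGraph V) (v : V) :
    SimpleGraph (V ⊕ T.edgeSet) :=
  SimpleGraph.fromEdgeSet (Set.range (blowEdge T v))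

/-- The set `N` after the blow-up at `v ∈ N`: the old vertices of `N` other than
`v`, together with all the new leaf copies of `v`. -/
def blowN {V : Type*} (T : SimpleGraph V) (v : V) (N : Set V) :
    Set (V ⊕ T.edgeSet) :=
  {x | (∃ a ∈ N, a ≠ v ∧ x = Sum.inl a) ∨
       (∃ e : T.edgeSet, v ∈ (e : Sym2 V) ∧ x = Sum.inr e)}

namespace BlowAux

variable {V : Type*} {T : SimpleGraph V} {v : V} {N : Set V}

noncomputable def proj (T : SimpleGraph V) (v : V) : V ⊕ T.edgeSet → V :=
  Sum.elim id fun _ => v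

lemma map_proj_blowEdge (T : SimpleGraph V) (v : V) (e : T.edgeSet) :
    Sym2.map (proj T v) (blowEdge T v e) = (e : Sym2 V) := by
  by_cases h : v ∈ (e : Sym2 V)
  · rw [blowEdge, dif_pos h, Sym2.map_pair_eq]
    simpa [proj, Sym2.eq_swap] using Sym2.other_spec h
  · rw [blowEdge, dif_neg h, Sym2.map_map]
    have : (proj T v ∘ (Sum.inl : V → V ⊕ T.edgeSet)) = id := rfl
    rw [this, Sym2.map_id]
    rfl

variable (P : T.edgeSet → Prop)

noncomputable def G : SimpleGraph V :=
  SimpleGraph.fromEdgeSet {s | ∃ e : T.edgeSet, P e ∧ (e : Sym2 V) = s}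

noncomputable def G' : SimpleGraph (V ⊕ T.edgeSet) :=
  SimpleGraph.fromEdgeSet {s | ∃ e : T.edgeSet, P e ∧ blowEdge T v e = s}

lemma proj_adj {a b : V ⊕ T.edgeSet} (h : (G' (v := v) P).Adj a b) :
    (G (T := T) P).Adj (proj T v a) (proj T v b) := by
  rw [G', SimpleGraph.fromEdgeSet_adj] at h
  obtain ⟨⟨e, hPe, hbe⟩, hab⟩ := h
  have hmap : s(proj T v a, proj T v b) = (e : Sym2 V) := by
    rw [← Sym2.map_pair_eq, ← hbe, map_proj_blowEdge]
  rw [G, SimpleGraph.fromEdgeSet_adj]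
  refine ⟨⟨e, hPe, hmap.symm⟩, ?_⟩
  intro hcon
  exact T.not_isDiag_of_mem_edgeSet e.2 (hmap ▸ Sym2.mk_isDiag_iff.mpr hcon)

noncomputable def projHom : G' (v := v) P →g G (T := T) P where
  toFun := proj T v
  map_rel' := proj_adj P

variable (N)

lemma adj_lift_nonv {x z : V} (hx : x ≠ v) (hz : z ≠ v)
    (h : (G (T := T) P).Adj x z) :
    (G' (v := v) P).Adj (Sum.inl x) (Sum.inl z) := by
  rw [G, SimpleGraph.fromEdgeSet_adj] at h
  obtain ⟨⟨e, hPe, hes⟩, hxz⟩ := h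
  have hve : v ∉ (e : Sym2 V) := by
    rw [hes, Sym2.mem_iff]
    rintro (rfl | rfl)
    exacts [hx rfl, hz rfl]
  rw [G', SimpleGraph.fromEdgeSet_adj]
  refine ⟨⟨e, hPe, ?_⟩, by simp [hxz]⟩
  rw [blowEdge, dif_neg hve, hes, Sym2.map_pair_eq]

lemma adj_lift_v {x : V} (hx : x ≠ v) (h : (G (T := T) P).Adj x v) :
    ∃ e : T.edgeSet, v ∈ (e : Sym2 V) ∧
      (G' (v := v) P).Adj (Sum.inl x) (Sum.inr e) := by
  rw [G, SimpleGraph.fromEdgeSet_adj] at h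
  obtain ⟨⟨e, hPe, hes⟩, hxv⟩ := h
  have hve : v ∈ (e : Sym2 V) := by rw [hes]; simp
  have hother : Sym2.Mem.other hve = x := by
    have h2 := (Sym2.other_spec hve).trans hes
    rcases Sym2.eq_iff.mp h2 with ⟨h3, h4⟩ | ⟨h3, h4⟩
    · exact absurd h3.symm hx
    · exact h4
  refine ⟨e, hve, ?_⟩
  rw [G', SimpleGraph.fromEdgeSet_adj]
  refine ⟨⟨e, hPe, ?_⟩, by simp⟩
  rw [blowEdge, dif_pos hve, hother, Sym2.eq_swap]

lemma walk_lift : ∀ {x y : V}, (G (T := T) P).Walk x y → x ≠ v → y ∈ N →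
    ∃ b ∈ blowN T v N, (G' (v := v) P).Reachable (Sum.inl x) b := by
  intro x y w
  induction w with
  | nil => exact fun hx hy => ⟨Sum.inl _, Or.inl ⟨_, hy, hx, rfl⟩, .refl _⟩
  | @cons a c y hadj w ih =>
    intro ha hy
    by_cases hc : c = v
    · subst hc
      obtain ⟨e, hve, hadj'⟩ := adj_lift_v P ha hadj
      exact ⟨Sum.inr e, Or.inr ⟨e, hve, rfl⟩, hadj'.reachable⟩
    · obtain ⟨b, hb, hr⟩ := ih hc hy
      exact ⟨b, hb, ((adj_lift_nonv P ha hc hadj).reachable).trans hr⟩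

lemma reach_iff (hvN : v ∈ N) {x : V} (hx : x ≠ v) :
    (∃ y ∈ N, (G (T := T) P).Reachable x y) ↔
    (∃ b ∈ blowN T v N, (G' (v := v) P).Reachable (Sum.inl x) b) := by
  constructor
  · rintro ⟨y, hy, ⟨w⟩⟩
    exact walk_lift N P w hx hy
  · rintro ⟨b, hb, hr⟩
    have h := hr.map (projHom P)
    rcases hb with ⟨a, haN, hav, rfl⟩ | ⟨e, hve, rfl⟩
    · exact ⟨a, haN, h⟩
    · exact ⟨v, hvN, h⟩

end BlowAux

/-- Let `T` be a finite tree with vertex partition `C ⊔ N` and let `v ∈ N` be a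
non-leaf vertex of degree `d ≥ 2`.  Blowing up `v` into `d` new degree-1
vertices of `N` (each incident to one of the `d` edges formerly at `v`) yields a
forest `T'` in which, for any fixed ordering of the edges (transported via the
canonical bijection of edges), the α-values agree edge-by-edge, and hence the
sums `∑ α(k)` of `T` and `T'` agree.  Here `α(k) = 0` iff both endpoints of the
`k`-th edge are connected to `N` using only earlier edges. -/
theorem blowup_preserves_alphaSum {V : Type*} [Fintype V]
    (T : SimpleGraph V) (hT : T.IsTree) (N : Set V)
    (v : V) (hv : v ∈ N) (hd : 2 ≤ T.degree v)
    (n : ℕ) (σ : Fin n ≃ T.edgeSet) :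
    (∀ k : Fin n,
      (if (∀ x ∈ (σ k : Sym2 V), ∃ y ∈ N,
          (SimpleGraph.fromEdgeSet
            {s | ∃ i : Fin n, i < k ∧ (σ i : Sym2 V) = s}).Reachable x y)
        then (0 : ℕ) else 1)
      = (if (∀ x ∈ blowEdge T v (σ k), ∃ y ∈ blowN T v N,
          (SimpleGraph.fromEdgeSet
            {s | ∃ i : Fin n, i < k ∧ blowEdge T v (σ i) = s}).Reachable x y)
        then (0 : ℕ) else 1)) ∧
    (∑ k : Fin n, if (∀ x ∈ (σ k : Sym2 V), ∃ y ∈ N,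
          (SimpleGraph.fromEdgeSet
            {s | ∃ i : Fin n, i < k ∧ (σ i : Sym2 V) = s}).Reachable x y)
        then (0 : ℕ) else 1)
      = (∑ k : Fin n, if (∀ x ∈ blowEdge T v (σ k), ∃ y ∈ blowN T v N,
          (SimpleGraph.fromEdgeSet
            {s | ∃ i : Fin n, i < k ∧ blowEdge T v (σ i) = s}).Reachable x y)
        then (0 : ℕ) else 1) := by
  classical
  have key : ∀ k : Fin n,
      (if (∀ x ∈ (σ k : Sym2 V), ∃ y ∈ N,
          (SimpleGraph.fromEdgeSet
            {s | ∃ i : Fin n, i < k ∧ (σ i : Sym2 V) = s}).Reachable x y)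
        then (0 : ℕ) else 1)
      = (if (∀ x ∈ blowEdge T v (σ k), ∃ y ∈ blowN T v N,
          (SimpleGraph.fromEdgeSet
            {s | ∃ i : Fin n, i < k ∧ blowEdge T v (σ i) = s}).Reachable x y)
        then (0 : ℕ) else 1) := by
    intro k
    have hset1 : {s : Sym2 V | ∃ i : Fin n, i < k ∧ (σ i : Sym2 V) = s}
        = {s | ∃ e : T.edgeSet, (∃ i : Fin n, i < k ∧ σ i = e) ∧ (e : Sym2 V) = s} := by
      ext s
      constructor
      · rintro ⟨i, hik, rfl⟩; exact ⟨σ i, ⟨i, hik, rfl⟩, rfl⟩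
      · rintro ⟨e, ⟨i, hik, rfl⟩, rfl⟩; exact ⟨i, hik, rfl⟩
    have hset2 : {s : Sym2 (V ⊕ T.edgeSet) | ∃ i : Fin n, i < k ∧ blowEdge T v (σ i) = s}
        = {s | ∃ e : T.edgeSet, (∃ i : Fin n, i < k ∧ σ i = e) ∧ blowEdge T v e = s} := by
      ext s
      constructor
      · rintro ⟨i, hik, rfl⟩; exact ⟨σ i, ⟨i, hik, rfl⟩, rfl⟩
      · rintro ⟨e, ⟨i, hik, rfl⟩, rfl⟩; exact ⟨i, hik, rfl⟩
    simp only [hset1, hset2]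
    refine if_congr ?_ rfl rfl
    by_cases hve : v ∈ (σ k : Sym2 V)
    · have hnd := T.not_isDiag_of_mem_edgeSet (σ k).2
      have hov : Sym2.Mem.other hve ≠ v := Sym2.other_ne hnd hve
      have hiff := BlowAux.reach_iff (T := T) N
        (fun e => ∃ i : Fin n, i < k ∧ σ i = e) hv hov
      rw [blowEdge, dif_pos hve]
      constructor
      · intro hall x hxmem
        rcases Sym2.mem_iff.mp hxmem with rfl | rfl
        · exact ⟨Sum.inr (σ k), Or.inr ⟨σ k, hve, rfl⟩, .refl _⟩
        · exact hiff.mp (hall _ (Sym2.other_mem hve))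
      · intro hall x hxmem
        have hspec := Sym2.other_spec hve
        rw [← hspec] at hxmem
        rcases Sym2.mem_iff.mp hxmem with h1 | h1
        · exact ⟨x, h1 ▸ hv, .refl _⟩
        · subst h1
          exact hiff.mpr (hall _ (Sym2.mem_mk_right _ _))
    · obtain ⟨a, b, hab⟩ :=
        Sym2.ind (f := fun z => ∃ a b : V, z = s(a, b)) (fun a b => ⟨a, b, rfl⟩)
          ((σ k : Sym2 V))
      have ha : a ≠ v := by rintro rfl; exact hve (by rw [hab]; simp)
      have hb : b ≠ v := by rintro rfl; exact hve (by rw [hab]; simp)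
      rw [blowEdge, dif_neg hve, hab, Sym2.map_pair_eq]
      simp only [Sym2.mem_iff, forall_eq_or_imp, forall_eq]
      exact and_congr
        (BlowAux.reach_iff (T := T) N (fun e => ∃ i : Fin n, i < k ∧ σ i = e) hv ha)
        (BlowAux.reach_iff (T := T) N (fun e => ∃ i : Fin n, i < k ∧ σ i = e) hv hb)
  exact ⟨key, Finset.sum_congr rfl fun k _ => key k⟩
end

section
/- Let T be a finite tree with vertex partition C ⊔ N and let e be an edge with a leaf endpoint in C. Let T' = T − e (deleting e and its leaf endpoint), with the induced partition. Then for any ordering σ of the edges of T, the α-values of the edges other than e computed in T with ordering σ coincide with the α-values computed in T' with the induced ordering; consequently Σ_T α = Σ_{T'} α + 1. -/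
open scoped Classical
open SimpleGraph Finset

private lemma reach_erase_aux {V : Type*} {G : SimpleGraph V} {u v : V}
    (hiso : ∀ w, ¬ G.Adj u w) :
    ∀ (n : ℕ) {x y : V} (p : (G ⊔ SimpleGraph.fromEdgeSet {s(u, v)}).Walk x y),
      p.length ≤ n → x ≠ u → y ≠ u → G.Reachable x y := by
  intro n
  induction n with
  | zero =>
    intro x y p hp hx hy
    cases p with
    | nil => exact Reachable.refl x
    | cons h q => simp [SimpleGraph.Walk.length_cons] at hp
  | succ n ih =>
    intro x y p hp hx hy
    cases p with
    | nil => exact Reachable.refl x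
    | @cons _ z _ h q =>
      rcases (SimpleGraph.sup_adj _ _ _ _).mp h with hG | hF
      · have hz : z ≠ u := fun e => hiso x (e ▸ hG.symm)
        exact hG.reachable.trans
          (ih q (by simpa [SimpleGraph.Walk.length_cons] using hp) hz hy)
      · rw [SimpleGraph.fromEdgeSet_adj] at hF
        have hxz : x = v ∧ z = u := by
          rcases Sym2.eq_iff.mp (Set.mem_singleton_iff.mp hF.1) with ⟨h1, h2⟩ | ⟨h1, h2⟩
          · exact absurd h1 hx
          · exact ⟨h1, h2⟩
        cases q with
        | nil => exact absurd hxz.2 hy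
        | @cons _ w _ h' q' =>
          have hw : w = v := by
            rcases (SimpleGraph.sup_adj _ _ _ _).mp h' with hG' | hF'
            · exact absurd (hxz.2 ▸ hG') (hiso w)
            · rw [SimpleGraph.fromEdgeSet_adj] at hF'
              rcases Sym2.eq_iff.mp (Set.mem_singleton_iff.mp hF'.1) with ⟨h1, h2⟩ | ⟨h1, h2⟩
              · exact h2
              · exact absurd (hxz.2.trans h2.symm) hF'.2
          obtain ⟨rfl, rfl⟩ := hxz
          subst hw
          simp only [SimpleGraph.Walk.length_cons] at hp
          exact ih q' (by omega) hx hy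

private lemma reach_isolated {V : Type*} {G : SimpleGraph V} {u y : V}
    (hiso : ∀ w, ¬ G.Adj u w) (h : G.Reachable u y) : y = u := by
  obtain ⟨p⟩ := h
  cases p with
  | nil => rfl
  | cons h q => exact absurd h (hiso _)

/-- Let `T` be a finite tree with vertex partition `C ⊔ N` (here `C = Nᶜ`), and
let `e = σ j` be an edge of `T` having a leaf endpoint `u ∈ C`.  Let `T' = T - e`
with the induced partition, and give the edges of `T'` the ordering induced by
`σ` (skipping the position `j`).  Then the α-value of every edge other than `e`
computed in `T` coincides with its α-value computed in `T'`; consequently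
`Σ_T α = Σ_{T'} α + 1`.  Here `α(e_k) = 0` iff both endpoints of `e_k` are
reachable from `N` using the earlier edges only. -/
theorem delete_pendant_edge_alpha {V : Type*} [Fintype V]
    (T : SimpleGraph V) (hT : T.IsTree) (N : Set V)
    (n : ℕ) (σ : Fin (n + 1) ≃ T.edgeSet) (j : Fin (n + 1))
    (u : V) (hu : u ∈ (σ j : Sym2 V)) (huleaf : T.degree u = 1) (huC : u ∉ N) :
    (∀ i : Fin n,
      (if (∀ x ∈ (σ (j.succAbove i) : Sym2 V), ∃ y ∈ N,
          (SimpleGraph.fromEdgeSet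
            {s | ∃ m : Fin n, m < i ∧ (σ (j.succAbove m) : Sym2 V) = s}).Reachable x y)
        then (0 : ℕ) else 1)
      = (if (∀ x ∈ (σ (j.succAbove i) : Sym2 V), ∃ y ∈ N,
          (SimpleGraph.fromEdgeSet
            {s | ∃ m : Fin (n + 1), m < j.succAbove i ∧ (σ m : Sym2 V) = s}).Reachable x y)
        then (0 : ℕ) else 1)) ∧
    (∑ k : Fin (n + 1), if (∀ x ∈ (σ k : Sym2 V), ∃ y ∈ N,
          (SimpleGraph.fromEdgeSet
            {s | ∃ m : Fin (n + 1), m < k ∧ (σ m : Sym2 V) = s}).Reachable x y)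
        then (0 : ℕ) else 1)
      = (∑ i : Fin n, if (∀ x ∈ (σ (j.succAbove i) : Sym2 V), ∃ y ∈ N,
          (SimpleGraph.fromEdgeSet
            {s | ∃ m : Fin n, m < i ∧ (σ (j.succAbove m) : Sym2 V) = s}).Reachable x y)
        then (0 : ℕ) else 1) + 1 := by
  classical
  -- u belongs to exactly one edge of T, namely σ j
  have hu_unique : ∀ m : Fin (n + 1), u ∈ (σ m : Sym2 V) → m = j := by
    intro m hm
    have hcard : #(T.incidenceFinset u) = 1 := by
      rw [SimpleGraph.card_incidenceFinset_eq_degree]; exact huleaf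
    have h1 : (σ m : Sym2 V) ∈ T.incidenceFinset u := by
      rw [SimpleGraph.mem_incidenceFinset]; exact ⟨(σ m).2, hm⟩
    have h2 : (σ j : Sym2 V) ∈ T.incidenceFinset u := by
      rw [SimpleGraph.mem_incidenceFinset]; exact ⟨(σ j).2, hu⟩
    have : (σ m : Sym2 V) = (σ j : Sym2 V) :=
      Finset.card_le_one.mp (le_of_eq hcard) _ h1 _ h2
    exact σ.injective (Subtype.coe_injective this)
  set v : V := Sym2.Mem.other hu with hv
  have hσj : (σ j : Sym2 V) = s(u, v) := (Sym2.other_spec hu).symm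
  -- isolation of u in any fromEdgeSet of edges σ m with m ≠ j
  have hiso : ∀ (S : Set (Sym2 V)),
      (∀ s ∈ S, ∃ m : Fin (n + 1), m ≠ j ∧ (σ m : Sym2 V) = s) →
      ∀ w, ¬ (SimpleGraph.fromEdgeSet S).Adj u w := by
    intro S hS w hadj
    rw [SimpleGraph.fromEdgeSet_adj] at hadj
    obtain ⟨m, hmj, hms⟩ := hS _ hadj.1
    exact hmj (hu_unique m (by rw [hms]; exact Sym2.mem_mk_left u w))
  -- vertices of edges other than σ j differ from u
  have hxu : ∀ (m : Fin (n + 1)), m ≠ j → ∀ x ∈ (σ m : Sym2 V), x ≠ u := by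
    intro m hm x hx hxe
    exact hm (hu_unique m (hxe ▸ hx))
  -- main pointwise equality
  have key : ∀ i : Fin n,
      (∀ x ∈ (σ (j.succAbove i) : Sym2 V), ∃ y ∈ N,
          (SimpleGraph.fromEdgeSet
            {s | ∃ m : Fin n, m < i ∧ (σ (j.succAbove m) : Sym2 V) = s}).Reachable x y)
      ↔ (∀ x ∈ (σ (j.succAbove i) : Sym2 V), ∃ y ∈ N,
          (SimpleGraph.fromEdgeSet
            {s | ∃ m : Fin (n + 1), m < j.succAbove i ∧ (σ m : Sym2 V) = s}).Reachable x y) := by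
    intro i
    set A : Set (Sym2 V) := {s | ∃ m : Fin n, m < i ∧ (σ (j.succAbove m) : Sym2 V) = s} with hA
    set B : Set (Sym2 V) := {s | ∃ m : Fin (n + 1), m < j.succAbove i ∧ (σ m : Sym2 V) = s} with hB
    have hAB : A ⊆ B := by
      rintro s ⟨m, hmi, rfl⟩
      exact ⟨j.succAbove m, Fin.succAbove_lt_succAbove_iff.mpr hmi, rfl⟩
    have hBA : B ⊆ A ∪ {s(u, v)} := by
      rintro s ⟨m, hmi, rfl⟩
      by_cases hmj : m = j
      · right; rw [hmj]; exact hσj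
      · left
        obtain ⟨m', rfl⟩ := Fin.exists_succAbove_eq hmj
        exact ⟨m', Fin.succAbove_lt_succAbove_iff.mp hmi, rfl⟩
    have hisoA : ∀ w, ¬ (SimpleGraph.fromEdgeSet A).Adj u w := by
      apply hiso
      rintro s ⟨m, hmi, rfl⟩
      exact ⟨j.succAbove m, Fin.succAbove_ne j m, rfl⟩
    constructor
    · intro h x hx
      obtain ⟨y, hy, hr⟩ := h x hx
      exact ⟨y, hy, hr.mono (SimpleGraph.fromEdgeSet_mono hAB)⟩
    · intro h x hx
      obtain ⟨y, hy, hr⟩ := h x hx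
      have hr2 : (SimpleGraph.fromEdgeSet A ⊔ SimpleGraph.fromEdgeSet {s(u, v)}).Reachable x y := by
        have := hr.mono (SimpleGraph.fromEdgeSet_mono hBA)
        rwa [SimpleGraph.fromEdgeSet_union] at this
      have hxu' : x ≠ u := hxu _ (Fin.succAbove_ne j i) x hx
      have hyu : y ≠ u := fun e => huC (e ▸ hy)
      obtain ⟨p⟩ := hr2
      exact ⟨y, hy, reach_erase_aux hisoA p.length p le_rfl hxu' hyu⟩
  refine ⟨fun i => by rw [if_congr (key i) rfl rfl], ?_⟩
  rw [Fin.sum_univ_succAbove _ j]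
  have hjterm : (if (∀ x ∈ (σ j : Sym2 V), ∃ y ∈ N,
      (SimpleGraph.fromEdgeSet
        {s | ∃ m : Fin (n + 1), m < j ∧ (σ m : Sym2 V) = s}).Reachable x y)
      then (0 : ℕ) else 1) = 1 := by
    rw [if_neg]
    intro h
    obtain ⟨y, hy, hr⟩ := h u hu
    have hisoJ : ∀ w, ¬ (SimpleGraph.fromEdgeSet
        {s | ∃ m : Fin (n + 1), m < j ∧ (σ m : Sym2 V) = s}).Adj u w := by
      apply hiso
      rintro s ⟨m, hmj, rfl⟩
      exact ⟨m, ne_of_lt hmj, rfl⟩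
    exact huC ((reach_isolated hisoJ hr) ▸ hy)
  rw [hjterm]
  have : ∀ i : Fin n,
      (if (∀ x ∈ (σ (j.succAbove i) : Sym2 V), ∃ y ∈ N,
          (SimpleGraph.fromEdgeSet
            {s | ∃ m : Fin (n + 1), m < j.succAbove i ∧ (σ m : Sym2 V) = s}).Reachable x y)
        then (0 : ℕ) else 1)
      = (if (∀ x ∈ (σ (j.succAbove i) : Sym2 V), ∃ y ∈ N,
          (SimpleGraph.fromEdgeSet
            {s | ∃ m : Fin n, m < i ∧ (σ (j.succAbove m) : Sym2 V) = s}).Reachable x y)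
        then (0 : ℕ) else 1) := fun i => by rw [if_congr (key i) rfl rfl]
  rw [Finset.sum_congr rfl (fun i _ => this i)]
  omega
end
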